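/- Let m ≥ 0 be an integer and let f₀ be the quadratic form on ℚ^{4+2m} given by f₀(x) = -x₀² + x₁² + x₂² + ⋯ + x_{4+2m-1}² (one coefficient -1 and all remaining coefficients 1). Then there exists a (4+2m)×(4+2m) matrix A with rational entries such that f₀(A·x) = 2·f₀(x) for all x ∈ ℚ^{4+2m} and A² = 2·I, where I is the identity matrix. -/
import Mathlib

open Matrix

namespace Stmt13Aux

/-- The exceptional 2×2 block: a √2-similarity of `-x² + y²`. -/
def Mb : Matrix (Fin 2) (Fin 2) ℚ := !![3/2, 1/2; -1/2, -3/2]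

/-- The standard 2×2 block: a √2-similarity of `x² + y²`. -/
def Cb : Matrix (Fin 2) (Fin 2) ℚ := !![1, 1; 1, -1]

/-- Diagonal coefficients of the form, block by block. -/
def dd (m : ℕ) (k : Fin (m + 2)) (a : Fin 2) : ℚ := if k = 0 ∧ a = 0 then -1 else 1

/-- The family of 2×2 blocks. -/
def Mf (m : ℕ) (k : Fin (m + 2)) : Matrix (Fin 2) (Fin 2) ℚ := if k = 0 then Mb else Cb

/-- The family of 2×2 diagonal blocks of the form. -/
def Df (m : ℕ) (k : Fin (m + 2)) : Matrix (Fin 2) (Fin 2) ℚ := diagonal (dd m k)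

lemma Mb_sq : Mb * Mb = (2 : ℚ) • (1 : Matrix (Fin 2) (Fin 2) ℚ) := by
  ext i j
  fin_cases i <;> fin_cases j <;>
    simp [Mb, Matrix.mul_apply, Fin.sum_univ_two, Matrix.one_apply,
      Matrix.vecHead, Matrix.vecTail] <;> norm_num

lemma Cb_sq : Cb * Cb = (2 : ℚ) • (1 : Matrix (Fin 2) (Fin 2) ℚ) := by
  ext i j
  fin_cases i <;> fin_cases j <;>
    simp [Cb, Matrix.mul_apply, Fin.sum_univ_two, Matrix.one_apply,
      Matrix.vecHead, Matrix.vecTail] <;> norm_num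

lemma Mf_sq (m : ℕ) (k : Fin (m + 2)) :
    Mf m k * Mf m k = (2 : ℚ) • (1 : Matrix (Fin 2) (Fin 2) ℚ) := by
  by_cases hk : k = 0
  · rw [Mf, if_pos hk]; exact Mb_sq
  · rw [Mf, if_neg hk]; exact Cb_sq

lemma Df_zero (m : ℕ) : Df m 0 = !![-1, 0; 0, 1] := by
  ext a b
  fin_cases a <;> fin_cases b <;>
    simp [Df, dd, Matrix.diagonal_apply]

lemma Df_ne (m : ℕ) (k : Fin (m + 2)) (hk : k ≠ 0) : Df m k = 1 := by
  have : dd m k = fun _ => (1 : ℚ) := by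
    funext a; exact if_neg (fun h => hk h.1)
  rw [Df, this, Matrix.diagonal_one]

lemma Mf_cong (m : ℕ) (k : Fin (m + 2)) :
    (Mf m k)ᵀ * (Df m k * Mf m k) = (2 : ℚ) • Df m k := by
  by_cases hk : k = 0
  · subst hk
    rw [Mf, if_pos rfl, Df_zero]
    ext i j
    fin_cases i <;> fin_cases j <;>
      simp [Mb, Matrix.mul_apply, Fin.sum_univ_two, Matrix.transpose_apply,
        Matrix.vecHead, Matrix.vecTail] <;> norm_num
  · rw [Mf, if_neg hk, Df_ne m k hk, Matrix.one_mul]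
    ext i j
    fin_cases i <;> fin_cases j <;>
      simp [Cb, Matrix.mul_apply, Fin.sum_univ_two, Matrix.transpose_apply,
        Matrix.one_apply, Matrix.vecHead, Matrix.vecTail] <;> norm_num

/-- The reindexing equivalence. -/
def e (m : ℕ) : Fin 2 × Fin (m + 2) ≃ Fin (4 + 2 * m) :=
  finProdFinEquiv.trans (finCongr (by ring))

lemma e_zero (m : ℕ) : (e m ((0 : Fin 2), (0 : Fin (m + 2)))).val = 0 := by
  simp [e, finProdFinEquiv]

/-- The global similarity matrix. -/
def A (m : ℕ) : Matrix (Fin (4 + 2 * m)) (Fin (4 + 2 * m)) ℚ :=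
  Matrix.reindexAlgEquiv ℚ ℚ (e m) (blockDiagonal (Mf m))

/-- The Gram matrix of the quadratic form. -/
def D (m : ℕ) : Matrix (Fin (4 + 2 * m)) (Fin (4 + 2 * m)) ℚ :=
  diagonal (fun i => if i.val = 0 then (-1 : ℚ) else 1)

lemma D_eq (m : ℕ) :
    D m = Matrix.reindexAlgEquiv ℚ ℚ (e m) (blockDiagonal (Df m)) := by
  have hbd : blockDiagonal (Df m) = diagonal (fun ik : Fin 2 × Fin (m+2) => dd m ik.2 ik.1) :=
    blockDiagonal_diagonal _
  rw [Matrix.reindexAlgEquiv_apply, hbd, Matrix.reindex_apply, submatrix_diagonal_equiv, D]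
  ext i j
  rcases eq_or_ne i j with rfl | hij
  swap
  · rw [Matrix.diagonal_apply_ne _ hij, Matrix.diagonal_apply_ne _ hij]
  rw [Matrix.diagonal_apply_eq, Matrix.diagonal_apply_eq]
  simp only [Function.comp_apply, dd]
  by_cases h : i.val = 0
  · have hi : i = e m ((0 : Fin 2), (0 : Fin (m + 2))) := by
      apply Fin.ext
      rw [e_zero, h]
    rw [if_pos h, hi, Equiv.symm_apply_apply]
    simp
  · have h2 : ((e m).symm i) ≠ ((0 : Fin 2), (0 : Fin (m + 2))) := by
      intro hh
      apply h
      have : i = e m ((0 : Fin 2), (0 : Fin (m + 2))) := by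
        rw [← hh, Equiv.apply_symm_apply]
      rw [this, e_zero]
    have h3 : ¬ (((e m).symm i).2 = 0 ∧ ((e m).symm i).1 = 0) := by
      intro hh
      exact h2 (Prod.ext hh.2 hh.1)
    rw [if_neg h3, if_neg h]

lemma A_sq (m : ℕ) :
    A m * A m = (2 : ℚ) • (1 : Matrix (Fin (4 + 2 * m)) (Fin (4 + 2 * m)) ℚ) := by
  rw [A, ← _root_.map_mul, ← Matrix.blockDiagonal_mul]
  have h1 : (blockDiagonal fun k => Mf m k * Mf m k) =
      (2 : ℚ) • (1 : Matrix (Fin 2 × Fin (m+2)) (Fin 2 × Fin (m+2)) ℚ) := by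
    have : (fun k => Mf m k * Mf m k) =
        (2 : ℚ) • (1 : Fin (m+2) → Matrix (Fin 2) (Fin 2) ℚ) := by
      funext k; exact Mf_sq m k
    rw [this, Matrix.blockDiagonal_smul, Matrix.blockDiagonal_one]
  rw [h1, _root_.map_smul, _root_.map_one]

lemma A_transpose (m : ℕ) :
    (A m)ᵀ = Matrix.reindexAlgEquiv ℚ ℚ (e m) (blockDiagonal (Mf m))ᵀ := by
  rw [A, Matrix.reindexAlgEquiv_apply, Matrix.reindexAlgEquiv_apply,
    Matrix.reindex_apply, Matrix.reindex_apply, Matrix.transpose_submatrix]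

lemma A_cong (m : ℕ) : (A m)ᵀ * (D m * A m) = (2 : ℚ) • D m := by
  rw [A_transpose, D_eq, A, ← _root_.map_mul, ← _root_.map_mul, Matrix.blockDiagonal_transpose,
    ← Matrix.blockDiagonal_mul, ← Matrix.blockDiagonal_mul]
  have h1 : (blockDiagonal fun k => (Mf m k)ᵀ * (Df m k * Mf m k)) =
      (2 : ℚ) • blockDiagonal (Df m) := by
    have : (fun k => (Mf m k)ᵀ * (Df m k * Mf m k)) = (2 : ℚ) • Df m := by
      funext k; exact Mf_cong m k
    rw [this, Matrix.blockDiagonal_smul]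
  rw [h1, _root_.map_smul]

end Stmt13Aux

/-- For `m ≥ 0` and `f₀(x) = -x₀² + x₁² + ⋯ + x_{4+2m-1}²` on
`ℚ^{4+2m}`, there exists a rational matrix `A` with `f₀(A·x) = 2·f₀(x)` for all
`x` and `A² = 2·I`. -/
theorem exists_rational_matrix_similarity_two
    (m : ℕ)
    (f₀ : (Fin (4 + 2 * m) → ℚ) → ℚ)
    (hf₀ : ∀ x, f₀ x =
      ∑ i : Fin (4 + 2 * m), (if i.val = 0 then (-1 : ℚ) else 1) * x i ^ 2) :
    ∃ A : Matrix (Fin (4 + 2 * m)) (Fin (4 + 2 * m)) ℚ,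
      (∀ x, f₀ (A.mulVec x) = 2 * f₀ x) ∧
      A ^ 2 = (2 : ℚ) • (1 : Matrix (Fin (4 + 2 * m)) (Fin (4 + 2 * m)) ℚ) := by
  classical
  refine ⟨Stmt13Aux.A m, fun x => ?_, by rw [pow_two]; exact Stmt13Aux.A_sq m⟩
  have hfD : ∀ y : Fin (4 + 2 * m) → ℚ, f₀ y = y ⬝ᵥ (Stmt13Aux.D m *ᵥ y) := by
    intro y
    rw [hf₀ y]
    simp only [dotProduct, Stmt13Aux.D, mulVec_diagonal]
    refine Finset.sum_congr rfl fun i _ => by ring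
  rw [hfD, hfD]
  have h1 : (Stmt13Aux.A m *ᵥ x) ⬝ᵥ (Stmt13Aux.D m *ᵥ (Stmt13Aux.A m *ᵥ x)) =
      x ⬝ᵥ (((Stmt13Aux.A m)ᵀ * (Stmt13Aux.D m * Stmt13Aux.A m)) *ᵥ x) := by
    rw [mulVec_mulVec, dotProduct_comm, dotProduct_mulVec, dotProduct_comm,
      ← mulVec_transpose, mulVec_mulVec]
  rw [h1, Stmt13Aux.A_cong, smul_mulVec, dotProduct_smul, smul_eq_mul]
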